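/- Let h > 0. Then ⟨F p, q⟩ = ⟨p, D q⟩ and ⟨D p, q⟩ = ⟨p, F q⟩ for all p, q ∈ ℂ[z] (F* = D and D* = F), and D and F are bounded: with C = max(1, 1/(2h))^{1/2} one has ‖D p‖ ≤ C·‖p‖ and ‖F p‖ ≤ C·‖p‖ for all p ∈ ℂ[z]. -/
import Mathlib


open Polynomial

noncomputable section

/-- Multiplication by `X` (the operator `l₋₁`). -/
def mulX : Module.End ℂ (Polynomial ℂ) := LinearMap.mulLeft ℂ (X : Polynomial ℂ)

/-- The differentiation operator `d/dz` (the operator `D`). -/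
def der : Module.End ℂ (Polynomial ℂ) := Polynomial.derivative

/-- The generators `l₋₁, l₀, l₁` of `sl(2,ℂ)` acting on the Verma module `V_h ≅ ℂ[z]`. -/
def lgen (h : ℝ) (i : ℤ) : Module.End ℂ (Polynomial ℂ) :=
  if i = -1 then mulX
  else if i = 0 then mulX * der + (h : ℂ) • 1
  else if i = 1 then mulX * der * der + ((2 * h : ℝ) : ℂ) • der
  else 0

/-- The operator `F`, `F zⁿ = zⁿ⁺¹/(n+2h)`. -/
def Fop (h : ℝ) : Module.End ℂ (Polynomial ℂ) :=
  (Polynomial.basisMonomials ℂ).constr ℂ fun n =>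
    (((n : ℂ) + 2 * (h : ℂ))⁻¹) • (X : Polynomial ℂ) ^ (n + 1)

/-- The `q_R`-conformal symmetries `L_k` (`k ∈ ℤ`) acting on `ℂ[z]`. -/
def Lop (h : ℝ) (k : ℤ) : Module.End ℂ (Polynomial ℂ) :=
  (Polynomial.basisMonomials ℂ).constr ℂ fun n =>
    if 0 ≤ k then
      ((((n : ℂ) - (k : ℂ)) + ((k : ℂ) + 1) * (h : ℂ)) * (n.descFactorial k.toNat : ℂ)) •
        (X : Polynomial ℂ) ^ (n - k.toNat)
    else
      (((n : ℂ) + (((-k).toNat : ℂ) + 1) * (h : ℂ)) /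
          ∏ j ∈ Finset.range (-k).toNat, ((n : ℂ) + 2 * (h : ℂ) + (j : ℂ))) •
        (X : Polynomial ℂ) ^ (n + (-k).toNat)

/-- The deviations `A_{n,m} = [L_n, L_m] − (n−m)·L_{n+m}`. -/
def dev (h : ℝ) (n m : ℤ) : Module.End ℂ (Polynomial ℂ) :=
  Lop h n * Lop h m - Lop h m * Lop h n - ((n - m : ℤ) : ℂ) • Lop h (n + m)

/-- The diagonal eigenvalue `a_k(j)` of the deviation `A_{k,−k}` on the monomial `z^j`. -/
def adiag (h : ℝ) (k : ℤ) (j : ℕ) : ℂ := ((dev h k (-k)) ((X : Polynomial ℂ) ^ j)).coeff j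

/-- The weight `⟨zⁿ, zⁿ⟩ = n!·(2h)(2h+1)⋯(2h+n−1)`. -/
def wgt (h : ℝ) (n : ℕ) : ℝ := (n.factorial : ℝ) * ∏ j ∈ Finset.range n, (2 * h + (j : ℝ))

/-- The inner product of the unitarizable Verma module (`h > 0`), conjugate-linear in
the first argument. -/
def ip (h : ℝ) (p q : Polynomial ℂ) : ℂ :=
  ∑ n ∈ p.support, (starRingEnd ℂ) (p.coeff n) * q.coeff n * ((wgt h n : ℝ) : ℂ)

/-- The associated norm. -/
def nrm (h : ℝ) (p : Polynomial ℂ) : ℝ := Real.sqrt (ip h p p).re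

/-- The fundamental form `α_{i,j} = ((6h²−6h+1)/6)·(j³−j)·δ_{i+j,0}`. -/
def alphaF (h : ℝ) (i j : ℤ) : ℝ :=
  if i + j = 0 then ((6 * h ^ 2 - 6 * h + 1) / 6) * ((j : ℝ) ^ 3 - (j : ℝ)) else 0

/-- The inverse fundamental form `α^{k,−k} = −1/α_{k,−k}` (for `|k| ≥ 2`). -/
def alphaInv (h : ℝ) (k : ℤ) : ℝ := -1 / alphaF h k (-k)


/- Auxiliary lemmas for stmt7 -/

lemma Fop_monomial' (h : ℝ) (n : ℕ) (a : ℂ) :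
    Fop h (monomial n a) = a • ((((n : ℂ) + 2 * h)⁻¹) • (X : Polynomial ℂ) ^ (n + 1)) := by
  have : (monomial n a : Polynomial ℂ) = a • (basisMonomials ℂ n) := by
    simp [coe_basisMonomials, smul_monomial]
  rw [this, map_smul, Fop, Module.Basis.constr_basis]

lemma Fop_coeff_succ (h : ℝ) (p : Polynomial ℂ) (k : ℕ) :
    (Fop h p).coeff (k + 1) = ((k : ℂ) + 2 * h)⁻¹ * p.coeff k := by
  induction p using Polynomial.induction_on' with
  | add p q hp hq => simp [map_add, hp, hq, mul_add]
  | monomial n a =>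
    rw [Fop_monomial']
    simp only [coeff_smul, smul_eq_mul, coeff_X_pow, coeff_monomial]
    by_cases hnk : n = k
    · subst hnk; simp [mul_comm]
    · have : ¬ (n + 1 = k + 1) := fun hc => hnk (Nat.succ_injective hc)
      simp [hnk, this, Ne.symm hnk]

lemma Fop_coeff_zero (h : ℝ) (p : Polynomial ℂ) : (Fop h p).coeff 0 = 0 := by
  induction p using Polynomial.induction_on' with
  | add p q hp hq => simp [map_add, hp, hq]
  | monomial n a =>
    rw [Fop_monomial']
    simp [coeff_X_pow]

lemma wgt_succ (h : ℝ) (n : ℕ) :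
    wgt h (n + 1) = ((n : ℝ) + 1) * (2 * h + n) * wgt h n := by
  simp only [wgt, Nat.factorial_succ, Finset.prod_range_succ]
  push_cast
  ring

lemma wgt_pos (h : ℝ) (hh : 0 < h) (n : ℕ) : 0 < wgt h n := by
  apply mul_pos (by positivity)
  apply Finset.prod_pos
  intro j _
  positivity

lemma ip_eq (h : ℝ) (p q : Polynomial ℂ) (N : ℕ) (hp : ∀ n, N ≤ n → p.coeff n = 0) :
    ip h p q = ∑ n ∈ Finset.range N,
      (starRingEnd ℂ) (p.coeff n) * q.coeff n * ((wgt h n : ℝ) : ℂ) := by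
  rw [ip]
  apply Finset.sum_subset
  · intro n hn
    rw [Finset.mem_range]
    by_contra hc
    exact (Polynomial.mem_support_iff.mp hn) (hp n (le_of_not_gt hc))
  · intro n _ hn
    rw [Polynomial.notMem_support_iff.mp hn]
    simp

lemma ip_self_re (h : ℝ) (p : Polynomial ℂ) (N : ℕ) (hp : ∀ n, N ≤ n → p.coeff n = 0) :
    (ip h p p).re = ∑ n ∈ Finset.range N, Complex.normSq (p.coeff n) * wgt h n := by
  rw [ip_eq h p p N hp, Complex.re_sum]
  apply Finset.sum_congr rfl
  intro n _
  have : (starRingEnd ℂ) (p.coeff n) * p.coeff n = (Complex.normSq (p.coeff n) : ℂ) := by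
    rw [mul_comm, Complex.mul_conj]
  rw [this, ← Complex.ofReal_mul, Complex.ofReal_re]

lemma der_apply (q : Polynomial ℂ) : der q = derivative q := rfl

lemma Fop_coeff_vanish (h : ℝ) (hh : 0 < h) (p : Polynomial ℂ) (n : ℕ)
    (hn : p.natDegree + 2 ≤ n) : (Fop h p).coeff n = 0 := by
  obtain ⟨m, rfl⟩ : ∃ m, n = m + 1 := ⟨n - 1, by omega⟩
  rw [Fop_coeff_succ, p.coeff_eq_zero_of_natDegree_lt (by omega), mul_zero]

lemma conj_inv_real (h : ℝ) (hh : 0 < h) (m : ℕ) :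
    (starRingEnd ℂ) (((m : ℂ) + 2 * h)⁻¹) = ((m : ℂ) + 2 * h)⁻¹ := by
  have hreal : ((m : ℂ) + 2 * h) = (((m : ℝ) + 2 * h : ℝ) : ℂ) := by push_cast; ring
  rw [map_inv₀, hreal, Complex.conj_ofReal]

lemma cast_ne (h : ℝ) (hh : 0 < h) (m : ℕ) : ((m : ℂ) + 2 * h) ≠ 0 := by
  have hreal : ((m : ℂ) + 2 * h) = (((m : ℝ) + 2 * h : ℝ) : ℂ) := by push_cast; ring
  rw [hreal, Ne, Complex.ofReal_eq_zero]
  positivity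

lemma key_term (h : ℝ) (hh : 0 < h) (p q : Polynomial ℂ) (m : ℕ) :
    (starRingEnd ℂ) ((Fop h p).coeff (m + 1)) * q.coeff (m + 1) * ((wgt h (m + 1) : ℝ) : ℂ) =
    (starRingEnd ℂ) (p.coeff m) * ((derivative q).coeff m) * ((wgt h m : ℝ) : ℂ) := by
  rw [Fop_coeff_succ, map_mul, conj_inv_real h hh, coeff_derivative, wgt_succ]
  have hne := cast_ne h hh m
  push_cast
  field_simp
  ring

lemma fadj (h : ℝ) (hh : 0 < h) (p q : Polynomial ℂ) :
    ip h ((Fop h) p) q = ip h p (der q) := by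
  set N := p.natDegree + 1 with hN
  rw [ip_eq h ((Fop h) p) q (N + 1)
      (fun n hn => Fop_coeff_vanish h hh p n (by omega)),
    ip_eq h p (der q) N (fun n hn => p.coeff_eq_zero_of_natDegree_lt (by omega)),
    Finset.sum_range_succ']
  rw [Fop_coeff_zero]
  simp only [map_zero, zero_mul, add_zero]
  exact Finset.sum_congr rfl fun m _ => by rw [key_term h hh p q m, der_apply]

lemma dadj (h : ℝ) (hh : 0 < h) (p q : Polynomial ℂ) :
    ip h (der p) q = ip h p ((Fop h) q) := by
  set N := p.natDegree + 1 with hN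
  rw [ip_eq h (der p) q N
      (fun n hn => by
        rw [der_apply, coeff_derivative, p.coeff_eq_zero_of_natDegree_lt (by omega), zero_mul]),
    ip_eq h p ((Fop h) q) (N + 1) (fun n hn => p.coeff_eq_zero_of_natDegree_lt (by omega))]
  conv_rhs => rw [Finset.sum_range_succ']
  have h0 : (starRingEnd ℂ) (p.coeff 0) * (Fop h q).coeff 0 * ((wgt h 0 : ℝ) : ℂ)
      = 0 := by rw [Fop_coeff_zero]; ring
  rw [h0, add_zero]
  refine Finset.sum_congr rfl fun m _ => ?_
  rw [der_apply, coeff_derivative, Fop_coeff_succ, map_mul, wgt_succ]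
  have hne := cast_ne h hh m
  have hc1 : (starRingEnd ℂ) ((m : ℂ) + 1) = (m : ℂ) + 1 := by
    have : ((m : ℂ) + 1) = (((m : ℝ) + 1 : ℝ) : ℂ) := by push_cast; ring
    rw [this, Complex.conj_ofReal]
  rw [hc1]
  push_cast
  field_simp
  ring

lemma key_ineq (h : ℝ) (hh : 0 < h) (m : ℕ) :
    (m : ℝ) + 1 ≤ max 1 (1 / (2 * h)) * (2 * h + m) := by
  have hm : (0 : ℝ) ≤ m := Nat.cast_nonneg m
  rcases le_total 1 (2 * h) with hc | hc
  · have : max 1 (1 / (2 * h)) = 1 := max_eq_left (by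
      rw [div_le_one (by linarith)]; linarith)
    rw [this]; linarith
  · have h2 : (0 : ℝ) < 2 * h := by linarith
    have : max 1 (1 / (2 * h)) = 1 / (2 * h) := max_eq_right (by
      rw [le_div_iff₀ h2]; linarith)
    rw [this]
    rw [div_mul_eq_mul_div, le_div_iff₀ h2]
    nlinarith

lemma wgt_nonneg (h : ℝ) (hh : 0 < h) (n : ℕ) : 0 ≤ wgt h n := (wgt_pos h hh n).le

lemma dbound (h : ℝ) (hh : 0 < h) (p : Polynomial ℂ) :
    nrm h (der p) ≤ Real.sqrt (max 1 (1 / (2 * h))) * nrm h p := by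
  set C2 : ℝ := max 1 (1 / (2 * h)) with hC2
  have hC2nn : 0 ≤ C2 := le_trans zero_le_one (le_max_left _ _)
  set N := p.natDegree + 1 with hN
  have hA : (ip h (der p) (der p)).re =
      ∑ m ∈ Finset.range N, Complex.normSq ((der p).coeff m) * wgt h m :=
    ip_self_re h (der p) N (fun n hn => by
      rw [der_apply, coeff_derivative, p.coeff_eq_zero_of_natDegree_lt (by omega), zero_mul])
  have hB : (ip h p p).re =
      ∑ n ∈ Finset.range (N + 1), Complex.normSq (p.coeff n) * wgt h n :=
    ip_self_re h p (N + 1) (fun n hn => p.coeff_eq_zero_of_natDegree_lt (by omega))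
  have hle : (ip h (der p) (der p)).re ≤ C2 * (ip h p p).re := by
    rw [hA, hB]
    conv_rhs => rw [Finset.sum_range_succ', mul_add, Finset.mul_sum]
    have hmain : ∀ m ∈ Finset.range N,
        Complex.normSq ((der p).coeff m) * wgt h m ≤
        C2 * (Complex.normSq (p.coeff (m + 1)) * wgt h (m + 1)) := by
      intro m _
      rw [der_apply, coeff_derivative, Complex.normSq_mul, wgt_succ]
      have hn1 : Complex.normSq ((m : ℂ) + 1) = ((m : ℝ) + 1) * ((m : ℝ) + 1) := by
        have : ((m : ℂ) + 1) = (((m : ℝ) + 1 : ℝ) : ℂ) := by push_cast; ring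
        rw [this, Complex.normSq_ofReal]
      rw [hn1]
      have hk := key_ineq h hh m
      have hw := wgt_nonneg h hh m
      have hns : (0 : ℝ) ≤ Complex.normSq (p.coeff (m + 1)) := Complex.normSq_nonneg _
      have hm : (0 : ℝ) ≤ (m : ℝ) := Nat.cast_nonneg m
      nlinarith [mul_nonneg (mul_nonneg hns hw) hm, mul_nonneg hns hw]
    calc ∑ m ∈ Finset.range N, Complex.normSq ((der p).coeff m) * wgt h m
        ≤ ∑ m ∈ Finset.range N,
            C2 * (Complex.normSq (p.coeff (m + 1)) * wgt h (m + 1)) :=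
          Finset.sum_le_sum hmain
      _ ≤ _ := by
          have : 0 ≤ C2 * (Complex.normSq (p.coeff 0) * wgt h 0) := by
            have := wgt_nonneg h hh 0
            have := Complex.normSq_nonneg (p.coeff 0)
            positivity
          linarith
  have hnn : 0 ≤ (ip h p p).re := by
    rw [hB]
    exact Finset.sum_nonneg fun n _ =>
      mul_nonneg (Complex.normSq_nonneg _) (wgt_nonneg h hh n)
  calc nrm h (der p) = Real.sqrt (ip h (der p) (der p)).re := rfl
    _ ≤ Real.sqrt (C2 * (ip h p p).re) := Real.sqrt_le_sqrt hle
    _ = Real.sqrt C2 * Real.sqrt (ip h p p).re := Real.sqrt_mul hC2nn _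
    _ = Real.sqrt C2 * nrm h p := rfl

lemma fbound (h : ℝ) (hh : 0 < h) (p : Polynomial ℂ) :
    nrm h ((Fop h) p) ≤ Real.sqrt (max 1 (1 / (2 * h))) * nrm h p := by
  set C2 : ℝ := max 1 (1 / (2 * h)) with hC2
  have hC2nn : 0 ≤ C2 := le_trans zero_le_one (le_max_left _ _)
  set N := p.natDegree + 1 with hN
  have hA : (ip h ((Fop h) p) ((Fop h) p)).re =
      ∑ n ∈ Finset.range (N + 1), Complex.normSq ((Fop h p).coeff n) * wgt h n :=
    ip_self_re h ((Fop h) p) (N + 1) (fun n hn => Fop_coeff_vanish h hh p n (by omega))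
  have hB : (ip h p p).re =
      ∑ n ∈ Finset.range N, Complex.normSq (p.coeff n) * wgt h n :=
    ip_self_re h p N (fun n hn => p.coeff_eq_zero_of_natDegree_lt (by omega))
  have hle : (ip h ((Fop h) p) ((Fop h) p)).re ≤ C2 * (ip h p p).re := by
    rw [hA, hB, Finset.sum_range_succ', Fop_coeff_zero]
    simp only [map_zero, zero_mul, add_zero, Finset.mul_sum]
    apply Finset.sum_le_sum
    intro m _
    rw [Fop_coeff_succ, Complex.normSq_mul, Complex.normSq_inv, wgt_succ]
    have hn2 : Complex.normSq ((m : ℂ) + 2 * h) = ((m : ℝ) + 2 * h) * ((m : ℝ) + 2 * h) := by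
      have : ((m : ℂ) + 2 * h) = (((m : ℝ) + 2 * h : ℝ) : ℂ) := by push_cast; ring
      rw [this, Complex.normSq_ofReal]
    rw [hn2]
    have hpos : (0 : ℝ) < (m : ℝ) + 2 * h := by positivity
    have hk := key_ineq h hh m
    have hw := wgt_nonneg h hh m
    have hns : (0 : ℝ) ≤ Complex.normSq (p.coeff m) := Complex.normSq_nonneg _
    have hkey : (((m : ℝ) + 2 * h) * ((m : ℝ) + 2 * h))⁻¹ *
        (((m : ℝ) + 1) * (2 * h + m) * wgt h m) ≤ C2 * wgt h m := by
      rw [inv_mul_le_iff₀ (by positivity)]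
      have : (2 * h + (m : ℝ)) = ((m : ℝ) + 2 * h) := by ring
      nlinarith [mul_le_mul_of_nonneg_right hk (mul_nonneg hw hpos.le),
        mul_nonneg (mul_nonneg hw hpos.le) hpos.le]
    calc (((m : ℝ) + 2 * h) * ((m : ℝ) + 2 * h))⁻¹ * Complex.normSq (p.coeff m) *
          (((m : ℝ) + 1) * (2 * h + m) * wgt h m)
        = Complex.normSq (p.coeff m) *
            ((((m : ℝ) + 2 * h) * ((m : ℝ) + 2 * h))⁻¹ *
              (((m : ℝ) + 1) * (2 * h + m) * wgt h m)) := by ring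
      _ ≤ Complex.normSq (p.coeff m) * (C2 * wgt h m) :=
          mul_le_mul_of_nonneg_left hkey hns
      _ = C2 * (Complex.normSq (p.coeff m) * wgt h m) := by ring
  have hnn : 0 ≤ (ip h p p).re := by
    rw [hB]
    exact Finset.sum_nonneg fun n _ =>
      mul_nonneg (Complex.normSq_nonneg _) (wgt_nonneg h hh n)
  calc nrm h ((Fop h) p) = Real.sqrt (ip h ((Fop h) p) ((Fop h) p)).re := rfl
    _ ≤ Real.sqrt (C2 * (ip h p p).re) := Real.sqrt_le_sqrt hle
    _ = Real.sqrt C2 * Real.sqrt (ip h p p).re := Real.sqrt_mul hC2nn _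
    _ = Real.sqrt C2 * nrm h p := rfl

/-- For `h > 0`: `F* = D`, `D* = F` with respect to the inner product of the
unitarizable Verma module, and `D`, `F` are bounded with norm constant
`C = max(1, 1/(2h))^{1/2}`. -/
theorem stmt7 (h : ℝ) (hh : 0 < h) :
    (∀ p q : Polynomial ℂ, ip h ((Fop h) p) q = ip h p (der q)) ∧
    (∀ p q : Polynomial ℂ, ip h (der p) q = ip h p ((Fop h) q)) ∧
    (∀ p : Polynomial ℂ, nrm h (der p) ≤ Real.sqrt (max 1 (1 / (2 * h))) * nrm h p) ∧
    (∀ p : Polynomial ℂ, nrm h ((Fop h) p) ≤ Real.sqrt (max 1 (1 / (2 * h))) * nrm h p) := by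
  exact ⟨fadj h hh, dadj h hh, dbound h hh, fbound h hh⟩
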